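/- For integers n, k with 2 ≤ k ≤ n/4, the Pareto set of OneJumpZeroJump_{n,k} is exactly S* = {x ∈ {0,1}^n : |x|₁ ∈ [k..n-k] ∪ {0, n}}: a point x is Pareto optimal (no y strictly dominates x with respect to maximizing (f1,f2)) if and only if x ∈ S*. -/

import Mathlib

/-- Number of one-bits of a bit string. -/
def onesCount {n : ℕ} (x : Fin n → Bool) : ℕ :=
  (Finset.univ.filter (fun i => x i = true)).card

/-- Number of zero-bits of a bit string. -/
def zerosCount {n : ℕ} (x : Fin n → Bool) : ℕ :=
  (Finset.univ.filter (fun i => x i = false)).card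

/-- First objective of OneJumpZeroJump_{n,k}. -/
def ojzjF1 (n k : ℕ) (x : Fin n → Bool) : ℤ :=
  if onesCount x ≤ n - k ∨ x = (fun _ => true) then (k : ℤ) + onesCount x
  else (n : ℤ) - onesCount x

/-- Second objective of OneJumpZeroJump_{n,k}. -/
def ojzjF2 (n k : ℕ) (x : Fin n → Bool) : ℤ :=
  if zerosCount x ≤ n - k ∨ x = (fun _ => false) then (k : ℤ) + zerosCount x
  else (n : ℤ) - zerosCount x

lemma onesCount_le_n {n : ℕ} (x : Fin n → Bool) : onesCount x ≤ n := by
  have := Finset.card_filter_le (Finset.univ : Finset (Fin n)) (fun i => x i = true)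
  simpa [onesCount] using this

lemma ones_add_zeros {n : ℕ} (x : Fin n → Bool) : onesCount x + zerosCount x = n := by
  classical
  have h : Finset.univ.filter (fun i => x i = false)
      = Finset.univ.filter (fun i => ¬ (x i = true)) := by
    apply Finset.filter_congr; intro i _; simp
  rw [onesCount, zerosCount, h, Finset.card_filter_add_card_filter_not]
  simp

lemma eq_allTrue_iff {n : ℕ} (x : Fin n → Bool) :
    x = (fun _ => true) ↔ onesCount x = n := by
  constructor
  · rintro rfl; simp [onesCount]
  · intro h
    funext i
    have : Finset.univ.filter (fun i => x i = true) = Finset.univ :=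
      Finset.eq_univ_of_card _ (by rw [Fintype.card_fin]; exact h)
    have hi : i ∈ Finset.univ.filter (fun i => x i = true) := by
      rw [this]; exact Finset.mem_univ i
    simpa using (Finset.mem_filter.mp hi).2

lemma eq_allFalse_iff {n : ℕ} (x : Fin n → Bool) :
    x = (fun _ => false) ↔ zerosCount x = n := by
  constructor
  · rintro rfl; simp [zerosCount]
  · intro h
    funext i
    have : Finset.univ.filter (fun i => x i = false) = Finset.univ :=
      Finset.eq_univ_of_card _ (by rw [Fintype.card_fin]; exact h)
    have hi : i ∈ Finset.univ.filter (fun i => x i = false) := by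
      rw [this]; exact Finset.mem_univ i
    simpa using (Finset.mem_filter.mp hi).2

lemma onesCount_pat {n m : ℕ} (hm : m < n) :
    onesCount (fun i : Fin n => decide (i.val < m)) = m := by
  have h : Finset.univ.filter (fun i : Fin n => decide (i.val < m) = true)
      = Finset.Iio (⟨m, hm⟩ : Fin n) := by
    ext i
    simp [Fin.lt_def]
  rw [onesCount, h, Fin.card_Iio]

lemma f1_low {n k : ℕ} (x : Fin n → Bool)
    (h : onesCount x ≤ n - k ∨ onesCount x = n) :
    ojzjF1 n k x = (k : ℤ) + onesCount x := by
  rw [ojzjF1, if_pos]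
  rcases h with h | h
  · exact Or.inl h
  · exact Or.inr ((eq_allTrue_iff x).mpr h)

lemma f1_high {n k : ℕ} (x : Fin n → Bool)
    (h1 : n - k < onesCount x) (h2 : onesCount x ≠ n) :
    ojzjF1 n k x = (n : ℤ) - onesCount x := by
  rw [ojzjF1, if_neg]
  push_neg
  exact ⟨h1, fun h => h2 ((eq_allTrue_iff x).mp h)⟩


lemma f2_low {n k : ℕ} (x : Fin n → Bool)
    (h : zerosCount x ≤ n - k ∨ zerosCount x = n) :
    ojzjF2 n k x = (k : ℤ) + zerosCount x := by
  rw [ojzjF2, if_pos]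
  rcases h with h | h
  · exact Or.inl h
  · exact Or.inr ((eq_allFalse_iff x).mpr h)

lemma f2_high {n k : ℕ} (x : Fin n → Bool)
    (h1 : n - k < zerosCount x) (h2 : zerosCount x ≠ n) :
    ojzjF2 n k x = (n : ℤ) - zerosCount x := by
  rw [ojzjF2, if_neg]
  push_neg
  exact ⟨h1, fun h => h2 ((eq_allFalse_iff x).mp h)⟩

/-- The sum of the two objectives is at most `n + 2k`. -/
lemma sum_le {n k : ℕ} (hk2 : 2 ≤ k) (hk : 4 * k ≤ n) (y : Fin n → Bool) :
    ojzjF1 n k y + ojzjF2 n k y ≤ (n : ℤ) + 2 * k := by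
  have hc := onesCount_le_n y
  have hcz := ones_add_zeros y
  set c := onesCount y with hcdef
  set z := zerosCount y with hzdef
  by_cases h1 : c ≤ n - k ∨ c = n
  · rw [f1_low y h1]
    by_cases h2 : z ≤ n - k ∨ z = n
    · rw [f2_low y h2]; push_cast; omega
    · push_neg at h2
      rw [f2_high y h2.1 h2.2]; push_cast; omega
  · push_neg at h1
    rw [f1_high y h1.1 h1.2]
    by_cases h2 : z ≤ n - k ∨ z = n
    · rw [f2_low y h2]; push_cast; omega
    · push_neg at h2
      rw [f2_high y h2.1 h2.2]; push_cast; omega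

/-- On the claimed Pareto set the sum of objectives equals `n + 2k`. -/
lemma sum_eq {n k : ℕ} (hk2 : 2 ≤ k) (hk : 4 * k ≤ n) (x : Fin n → Bool)
    (hx : (k ≤ onesCount x ∧ onesCount x ≤ n - k) ∨ onesCount x = 0 ∨ onesCount x = n) :
    ojzjF1 n k x + ojzjF2 n k x = (n : ℤ) + 2 * k := by
  have hc := onesCount_le_n x
  have hcz := ones_add_zeros x
  rcases hx with ⟨h1, h2⟩ | h | h
  · rw [f1_low x (Or.inl h2), f2_low x (Or.inl (by omega))]; push_cast; omega
  · rw [f1_low x (Or.inl (by omega)), f2_low x (Or.inr (by omega))]; push_cast; omega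
  · rw [f1_low x (Or.inr h), f2_low x (Or.inl (by omega))]; push_cast; omega

theorem stmt_1 (n k : ℕ) (hk2 : 2 ≤ k) (hk : 4 * k ≤ n) (x : Fin n → Bool) :
    (¬ ∃ y : Fin n → Bool,
        (ojzjF1 n k x ≤ ojzjF1 n k y ∧ ojzjF2 n k x ≤ ojzjF2 n k y) ∧
        (ojzjF1 n k y, ojzjF2 n k y) ≠ (ojzjF1 n k x, ojzjF2 n k x))
      ↔ (k ≤ onesCount x ∧ onesCount x ≤ n - k) ∨ onesCount x = 0 ∨ onesCount x = n := by
  have hc := onesCount_le_n x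
  have hcz := ones_add_zeros x
  constructor
  · -- contrapositive: if x ∉ S*, produce a strictly dominating y
    intro hpar
    by_contra hx
    push_neg at hx
    obtain ⟨hx1, hx2, hx3⟩ := hx
    apply hpar
    by_cases hlow : onesCount x < k
    · -- 0 < c < k : f1 x = k + c, f2 x = c
      have hxc : 0 < onesCount x := Nat.pos_of_ne_zero hx2
      refine ⟨(fun i : Fin n => decide (i.val < k)), ?_⟩
      have hky : onesCount (fun i : Fin n => decide (i.val < k)) = k :=
        onesCount_pat (by omega)
      have hzy := ones_add_zeros (fun i : Fin n => decide (i.val < k))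
      have hf1y : ojzjF1 n k (fun i : Fin n => decide (i.val < k)) = (k : ℤ) + k := by
        rw [f1_low _ (Or.inl (by omega)), hky]
      have hf2y : ojzjF2 n k (fun i : Fin n => decide (i.val < k)) = (k : ℤ) + (n - k) := by
        rw [f2_low _ (Or.inl (by omega))]
        congr 1
        push_cast
        omega
      have hf1x : ojzjF1 n k x = (k : ℤ) + onesCount x :=
        f1_low x (Or.inl (by omega))
      have hf2x : ojzjF2 n k x = (n : ℤ) - zerosCount x := by
        apply f2_high x (by omega) (by omega)
      constructor
      · constructor
        · rw [hf1x, hf1y]; push_cast; omega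
        · rw [hf2x, hf2y]; push_cast; omega
      · intro h
        have h2 := congrArg Prod.snd h
        simp only at h2
        rw [hf2x, hf2y] at h2
        push_cast at h2
        omega
    · -- n - k < c < n : f1 x = n - c, f2 x = k + z
      push_neg at hlow
      have hhigh : n - k < onesCount x := hx1 hlow
      refine ⟨(fun i : Fin n => decide (i.val < n - k)), ?_⟩
      have hky : onesCount (fun i : Fin n => decide (i.val < n - k)) = n - k :=
        onesCount_pat (by omega)
      have hzy := ones_add_zeros (fun i : Fin n => decide (i.val < n - k))
      have hf1y : ojzjF1 n k (fun i : Fin n => decide (i.val < n - k)) = (k : ℤ) + (n - k) := by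
        rw [f1_low _ (Or.inl (by omega)), hky]
        push_cast; omega
      have hf2y : ojzjF2 n k (fun i : Fin n => decide (i.val < n - k)) = (k : ℤ) + k := by
        rw [f2_low _ (Or.inl (by omega))]
        congr 1
        push_cast
        omega
      have hf1x : ojzjF1 n k x = (n : ℤ) - onesCount x :=
        f1_high x (by omega) hx3
      have hf2x : ojzjF2 n k x = (k : ℤ) + zerosCount x :=
        f2_low x (Or.inl (by omega))
      constructor
      · constructor
        · rw [hf1x, hf1y]; push_cast; omega
        · rw [hf2x, hf2y]; push_cast; omega
      · intro h
        have h1 := congrArg Prod.fst h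
        simp only at h1
        rw [hf1x, hf1y] at h1
        push_cast at h1
        omega
  · -- x ∈ S* is Pareto optimal
    intro hx
    rintro ⟨y, ⟨h1, h2⟩, hne⟩
    have hs := sum_le hk2 hk y
    have he := sum_eq hk2 hk x hx
    apply hne
    have e1 : ojzjF1 n k y = ojzjF1 n k x := by omega
    have e2 : ojzjF2 n k y = ojzjF2 n k x := by omega
    rw [e1, e2]
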